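/- Let A = F_2[ζ_1, ζ_2, ...] be the polynomial algebra over F_2 on generators ζ_i for i ≥ 1, with ζ_0 = 1 by convention. Let ψ : A → A ⊗ A be the F_2-algebra homomorphism determined by ψ(ζ_i) = Σ_{k=0}^{i} ζ_{i-k}^{2^k} ⊗ ζ_k. Then ψ is coassociative: (ψ ⊗ id) ∘ ψ = (id ⊗ ψ) ∘ ψ. -/

import Mathlib

noncomputable section
open scoped TensorProduct

/-- The field with two elements. -/
abbrev F2 := ZMod 2

/-- The mod-2 dual Steenrod algebra `A = F_2[ζ_1, ζ_2, …]`, where `X i` represents `ζ_{i+1}`. -/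
abbrev DualSteenrod := MvPolynomial ℕ F2

/-- The Milnor generators `ζ_i`, with the convention `ζ_0 = 1`. -/
def zeta : ℕ → DualSteenrod
  | 0 => 1
  | (i + 1) => MvPolynomial.X i

/-- The Milnor coproduct `ψ : A → A ⊗ A`, the `F_2`-algebra homomorphism determined by
`ψ(ζ_i) = Σ_{k=0}^{i} ζ_{i-k}^{2^k} ⊗ ζ_k`. -/
def psi : DualSteenrod →ₐ[F2] DualSteenrod ⊗[F2] DualSteenrod :=
  MvPolynomial.aeval fun i =>
    ∑ k ∈ Finset.range (i + 2), ((zeta (i + 1 - k)) ^ (2 ^ k)) ⊗ₜ[F2] (zeta k)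

lemma psi_zeta (m : ℕ) :
    psi (zeta m) = ∑ k ∈ Finset.range (m + 1), ((zeta (m - k)) ^ (2 ^ k)) ⊗ₜ[F2] (zeta k) := by
  cases m with
  | zero => simp [zeta, psi, Algebra.TensorProduct.one_def]
  | succ i => simp [zeta, psi, MvPolynomial.aeval_X]

lemma sum_reindex {M : Type*} [AddCommMonoid M] (n : ℕ) (T : ℕ → ℕ → ℕ → M) :
    ∑ k ∈ Finset.range (n + 1), ∑ j ∈ Finset.range (n - k + 1), T (n - k - j) j k
      = ∑ k ∈ Finset.range (n + 1), ∑ j ∈ Finset.range (k + 1), T (n - k) (k - j) j := by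
  rw [Finset.sum_sigma', Finset.sum_sigma']
  refine Finset.sum_nbij' (fun x => ⟨x.2 + x.1, x.1⟩) (fun x => ⟨x.2, x.1 - x.2⟩)
    ?hi ?hj ?li ?ri ?h
  case hi =>
    rintro ⟨k, j⟩ h
    simp only [Finset.mem_sigma, Finset.mem_range, Nat.lt_succ_iff] at h ⊢
    omega
  case hj =>
    rintro ⟨k, j⟩ h
    simp only [Finset.mem_sigma, Finset.mem_range, Nat.lt_succ_iff] at h ⊢
    omega
  case li =>
    rintro ⟨k, j⟩ h
    simp only [Finset.mem_sigma, Finset.mem_range, Nat.lt_succ_iff] at h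
    simp only [Sigma.mk.inj_iff, heq_eq_eq, true_and, and_true, eq_self_iff_true]
    omega
  case ri =>
    rintro ⟨k, j⟩ h
    simp only [Finset.mem_sigma, Finset.mem_range, Nat.lt_succ_iff] at h
    simp only [Sigma.mk.inj_iff, heq_eq_eq, true_and, and_true, eq_self_iff_true]
    omega
  case h =>
    rintro ⟨k, j⟩ h
    simp only [Finset.mem_sigma, Finset.mem_range, Nat.lt_succ_iff] at h
    dsimp only
    rw [Nat.add_sub_cancel, show n - (j + k) = n - k - j by omega]

lemma key_reindex (n : ℕ) :
    ∑ k ∈ Finset.range (n + 1), ∑ j ∈ Finset.range (n - k + 1),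
        ((zeta (n - k - j)) ^ (2 ^ (j + k))) ⊗ₜ[F2] (((zeta j) ^ (2 ^ k)) ⊗ₜ[F2] zeta k)
      = ∑ k ∈ Finset.range (n + 1), ∑ j ∈ Finset.range (k + 1),
        ((zeta (n - k)) ^ (2 ^ (k - j + j))) ⊗ₜ[F2] (((zeta (k - j)) ^ (2 ^ j)) ⊗ₜ[F2] zeta j) :=
  sum_reindex n (fun a b c => ((zeta a) ^ (2 ^ (b + c))) ⊗ₜ[F2]
    (((zeta b) ^ (2 ^ c)) ⊗ₜ[F2] zeta c))

set_option maxHeartbeats 1000000 in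
/-- The coproduct of the dual Steenrod algebra is coassociative. -/
theorem psi_coassoc :
    (Algebra.TensorProduct.assoc F2 F2 F2 DualSteenrod DualSteenrod DualSteenrod).toAlgHom.comp
        ((Algebra.TensorProduct.map psi (AlgHom.id F2 DualSteenrod)).comp psi)
      = (Algebra.TensorProduct.map (AlgHom.id F2 DualSteenrod) psi).comp psi := by
  haveI : CharP (DualSteenrod ⊗[F2] DualSteenrod) 2 := charP_of_injective_algebraMap' F2 2
  apply MvPolynomial.algHom_ext
  intro i
  have hX : (MvPolynomial.X i : DualSteenrod) = zeta (i + 1) := rfl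
  simp only [AlgHom.comp_apply, hX, psi_zeta]
  rw [map_sum, map_sum, map_sum]
  calc ∑ k ∈ Finset.range (i + 1 + 1),
        (Algebra.TensorProduct.assoc F2 F2 F2 DualSteenrod DualSteenrod DualSteenrod).toAlgHom
          ((Algebra.TensorProduct.map psi (AlgHom.id F2 DualSteenrod))
            (((zeta (i + 1 - k)) ^ (2 ^ k)) ⊗ₜ[F2] zeta k))
      = ∑ k ∈ Finset.range (i + 1 + 1), ∑ j ∈ Finset.range (i + 1 - k + 1),
          ((zeta (i + 1 - k - j)) ^ (2 ^ (j + k))) ⊗ₜ[F2]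
            (((zeta j) ^ (2 ^ k)) ⊗ₜ[F2] zeta k) := by
        refine Finset.sum_congr rfl fun k _ => ?_
        rw [Algebra.TensorProduct.map_tmul, AlgHom.coe_id, id_eq, map_pow, psi_zeta,
          sum_pow_char_pow]
        rw [TensorProduct.sum_tmul]
        rw [map_sum]
        refine Finset.sum_congr rfl fun j _ => ?_
        rw [Algebra.TensorProduct.tmul_pow, ← pow_mul, ← pow_add]
        exact Algebra.TensorProduct.assoc_tmul (R := F2) (S := F2) (T := F2) (A := DualSteenrod)
          (C := DualSteenrod) (D := DualSteenrod) _ _ _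
    _ = ∑ k ∈ Finset.range (i + 1 + 1), ∑ j ∈ Finset.range (k + 1),
          ((zeta (i + 1 - k)) ^ (2 ^ (k - j + j))) ⊗ₜ[F2]
            (((zeta (k - j)) ^ (2 ^ j)) ⊗ₜ[F2] zeta j) :=
        key_reindex (i + 1)
    _ = ∑ k ∈ Finset.range (i + 1 + 1), ∑ j ∈ Finset.range (k + 1),
          ((zeta (i + 1 - k)) ^ (2 ^ k)) ⊗ₜ[F2]
            (((zeta (k - j)) ^ (2 ^ j)) ⊗ₜ[F2] zeta j) := by
        refine Finset.sum_congr rfl fun k _ => Finset.sum_congr rfl fun j hj => ?_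
        rw [Finset.mem_range, Nat.lt_succ_iff] at hj
        rw [Nat.sub_add_cancel hj]
    _ = ∑ k ∈ Finset.range (i + 1 + 1),
          (Algebra.TensorProduct.map (AlgHom.id F2 DualSteenrod) psi)
            (((zeta (i + 1 - k)) ^ (2 ^ k)) ⊗ₜ[F2] zeta k) := by
        refine Finset.sum_congr rfl fun k _ => ?_
        rw [Algebra.TensorProduct.map_tmul, AlgHom.coe_id, id_eq, psi_zeta,
          TensorProduct.tmul_sum]
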